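/- Let P ⊆ ℝⁿ be a polytope. The following statements are equivalent: (1) every edge of P is parallel to e_j − e_i for some pair i, j ∈ [n], where e_i denotes the i-th standard basis vector of ℝⁿ; (2) there exists a submodular function f : 2^[n] → ℝ such that P = P_f = {x ∈ ℝⁿ : ∑_{i∈U} x_i ≤ f(U) for all U ⊆ [n], and ∑_{i∈[n]} x_i = f([n])}. -/

import Mathlib

namespace PaperPolymatroid

open Finset

variable {n : ℕ}

/-- dot product on `Fin n → ℝ`. -/
def dotv (w x : Fin n → ℝ) : ℝ := ∑ i, w i * x i

/-- 0/1 indicator vector of a finite set of coordinates. -/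
def ind (U : Finset (Fin n)) : Fin n → ℝ := fun i => if i ∈ U then 1 else 0

lemma dotv_ind (U : Finset (Fin n)) (x : Fin n → ℝ) :
    dotv (ind U) x = ∑ i ∈ U, x i := by
  simp only [dotv, ind, ite_mul, one_mul, zero_mul]
  rw [Finset.sum_ite_mem, Finset.univ_inter]

lemma isLinearMap_dotv (w : Fin n → ℝ) : IsLinearMap ℝ (dotv w) := by
  constructor
  · intro x y; simp [dotv, mul_add, Finset.sum_add_distrib]
  · intro c x; simp [dotv, Finset.mul_sum]; ring_nf
    exact Finset.sum_congr rfl fun i _ => by ring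

lemma dotv_add_right (w x y : Fin n → ℝ) : dotv w (x + y) = dotv w x + dotv w y :=
  (isLinearMap_dotv w).map_add x y

lemma dotv_smul_right (w : Fin n → ℝ) (c : ℝ) (x : Fin n → ℝ) :
    dotv w (c • x) = c * dotv w x :=
  (isLinearMap_dotv w).map_smul c x

lemma dotv_sub_right (w x y : Fin n → ℝ) : dotv w (x - y) = dotv w x - dotv w y := by
  simp [dotv, sub_mul, mul_sub, Finset.sum_sub_distrib]

lemma continuous_dotv (w : Fin n → ℝ) : Continuous (dotv w) := by
  unfold dotv
  exact continuous_finset_sum _ fun i _ => (continuous_const.mul (continuous_apply i))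

/-- max of a linear functional over a convex hull of a finite set is the max over the set. -/
lemma dotv_le_sup' {s : Finset (Fin n → ℝ)} (hs : s.Nonempty) (w : Fin n → ℝ)
    {x : Fin n → ℝ} (hx : x ∈ convexHull ℝ (s : Set (Fin n → ℝ))) :
    dotv w x ≤ s.sup' hs (dotv w) := by
  have h : convexHull ℝ (s : Set (Fin n → ℝ)) ⊆ {y | dotv w y ≤ s.sup' hs (dotv w)} := by
    apply convexHull_min
    · intro p hp
      exact Finset.le_sup' (dotv w) hp
    · exact convex_halfSpace_le (isLinearMap_dotv w) _
  exact h hx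

lemma isExtreme_maximizers {s : Finset (Fin n → ℝ)} (hs : s.Nonempty) (w : Fin n → ℝ) :
    IsExtreme ℝ (convexHull ℝ (s : Set (Fin n → ℝ)))
      {x ∈ convexHull ℝ (s : Set (Fin n → ℝ)) | dotv w x = s.sup' hs (dotv w)} := by
  constructor
  · intro x hx; exact hx.1
  · rintro p hp q hq z ⟨hzP, hzmax⟩ hzopen
    obtain ⟨a, b, ha, hb, hab, hz⟩ := hzopen
    have hp' : dotv w p ≤ s.sup' hs (dotv w) := dotv_le_sup' hs w hp
    have hq' : dotv w q ≤ s.sup' hs (dotv w) := dotv_le_sup' hs w hq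
    have hdz : a * dotv w p + b * dotv w q = s.sup' hs (dotv w) := by
      rw [← hzmax, ← hz, dotv_add_right, dotv_smul_right, dotv_smul_right]
    have h1 : dotv w p = s.sup' hs (dotv w) := by
      by_contra hne
      have hlt : dotv w p < s.sup' hs (dotv w) := lt_of_le_of_ne hp' hne
      have e1 : a * dotv w p + b * dotv w q < a * s.sup' hs (dotv w) + b * s.sup' hs (dotv w) :=
        add_lt_add_of_lt_of_le (mul_lt_mul_of_pos_left hlt ha) (mul_le_mul_of_nonneg_left hq' hb.le)
      have e2 : a * s.sup' hs (dotv w) + b * s.sup' hs (dotv w) = s.sup' hs (dotv w) := by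
        rw [← add_mul, hab, one_mul]
      linarith
    have h2 : dotv w q = s.sup' hs (dotv w) := by
      by_contra hne
      have hlt : dotv w q < s.sup' hs (dotv w) := lt_of_le_of_ne hq' hne
      have e1 : a * dotv w p + b * dotv w q < a * s.sup' hs (dotv w) + b * s.sup' hs (dotv w) :=
        add_lt_add_of_le_of_lt (mul_le_mul_of_nonneg_left hp' ha.le) (mul_lt_mul_of_pos_left hlt hb)
      have e2 : a * s.sup' hs (dotv w) + b * s.sup' hs (dotv w) = s.sup' hs (dotv w) := by
        rw [← add_mul, hab, one_mul]
      linarith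
    exact ⟨hp, h1⟩

/-- M1: there is an extreme point of the polytope maximizing a given functional. -/
lemma exists_extreme_maximizer {s : Finset (Fin n → ℝ)} (hs : s.Nonempty) (w : Fin n → ℝ) :
    ∃ x, x ∈ Set.extremePoints ℝ (convexHull ℝ (s : Set (Fin n → ℝ))) ∧
      dotv w x = s.sup' hs (dotv w) := by
  set P := convexHull ℝ (s : Set (Fin n → ℝ)) with hPdef
  set F := {x ∈ P | dotv w x = s.sup' hs (dotv w)} with hFdef
  have hPc : IsCompact P := (s.finite_toSet).isCompact_convexHull ℝ
  have hFclosed : IsClosed F := by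
    have : F = P ∩ (dotv w) ⁻¹' {s.sup' hs (dotv w)} := by
      ext z; simp [hFdef, Set.mem_setOf_eq]
    rw [this]
    exact IsClosed.inter ((s.finite_toSet).isClosed_convexHull ℝ)
      ((isClosed_singleton.preimage (continuous_dotv w)))
  have hFcomp : IsCompact F := IsCompact.of_isClosed_subset hPc hFclosed (fun z hz => hz.1)
  have hFne : F.Nonempty := by
    obtain ⟨p, hps, hp⟩ := Finset.exists_mem_eq_sup' hs (dotv w)
    exact ⟨p, subset_convexHull ℝ _ hps, hp.symm⟩
  obtain ⟨b, hb⟩ := hFcomp.extremePoints_nonempty hFne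
  refine ⟨b, (isExtreme_maximizers hs w).extremePoints_subset_extremePoints hb, hb.1.2⟩


/-- M2: at an extreme point which does not maximize `dotv c`, there is an
improving edge of the polytope. -/
lemma exists_improving_edge {s : Finset (Fin n → ℝ)} {x z c : Fin n → ℝ}
    (hx : x ∈ Set.extremePoints ℝ (convexHull ℝ (s : Set (Fin n → ℝ))))
    (hz : z ∈ convexHull ℝ (s : Set (Fin n → ℝ)))
    (hcz : dotv c x < dotv c z) :
    ∃ y, y ≠ x ∧ IsExtreme ℝ (convexHull ℝ (s : Set (Fin n → ℝ))) (segment ℝ x y) ∧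
      dotv c x < dotv c y := by
  classical
  set P := convexHull ℝ (s : Set (Fin n → ℝ)) with hPdef
  have hPconv : Convex ℝ P := convex_convexHull ℝ _
  have hPcomp : IsCompact P := (s.finite_toSet).isCompact_convexHull ℝ
  have hPclosed : IsClosed P := (s.finite_toSet).isClosed_convexHull ℝ
  have hxP : x ∈ P := hx.1
  have hdiff : Convex ℝ (P \ {x}) := (hPconv.mem_extremePoints_iff_convex_diff.mp hx).2
  have hxnot : x ∉ convexHull ℝ ((s.erase x : Finset (Fin n → ℝ)) : Set (Fin n → ℝ)) := by
    intro hmem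
    have hsub : ((s.erase x : Finset (Fin n → ℝ)) : Set (Fin n → ℝ)) ⊆ P \ {x} := by
      intro p hp
      rcases Finset.mem_erase.mp (Finset.mem_coe.mp hp) with ⟨hne, hps⟩
      exact ⟨subset_convexHull ℝ _ (Finset.mem_coe.mpr hps), hne⟩
    exact (convexHull_min hsub hdiff hmem).2 rfl
  obtain ⟨g, u, hgu, hub⟩ := geometric_hahn_banach_point_closed
    (convex_convexHull ℝ _) ((s.erase x).finite_toSet.isClosed_convexHull ℝ) hxnot
  have hgpos : ∀ p ∈ s.erase x, 0 < g (p - x) := by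
    intro p hp
    have hpB : (p : Fin n → ℝ) ∈ convexHull ℝ ((s.erase x : Finset (Fin n → ℝ)) : Set (Fin n → ℝ)) :=
      subset_convexHull ℝ _ (Finset.mem_coe.mpr hp)
    have h1 : g x < g p := lt_trans hgu (hub p hpB)
    simpa [map_sub] using sub_pos.mpr h1
  set D' : Finset (Fin n → ℝ) := (s.erase x).image (fun p => (g (p - x))⁻¹ • (p - x)) with hD'def
  set B := convexHull ℝ (D' : Set (Fin n → ℝ)) with hBdef
  have hgB : ∀ b ∈ B, g b = 1 := by
    intro b hb
    have hsub : (D' : Set (Fin n → ℝ)) ⊆ {y | g y = 1} := by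
      rintro v hv
      obtain ⟨p, hp, rfl⟩ := Finset.mem_image.mp (Finset.mem_coe.mp hv)
      have h1 := hgpos p hp
      show g ((g (p - x))⁻¹ • (p - x)) = 1
      rw [map_smul, smul_eq_mul, inv_mul_cancel₀ (ne_of_gt h1)]
    have hconv : Convex ℝ {y : Fin n → ℝ | g y = 1} := by
      have he : {y : Fin n → ℝ | g y = 1} = {y | g y ≤ 1} ∩ {y | 1 ≤ g y} := by
        ext y; simp [le_antisymm_iff, and_comm]
      rw [he]
      exact (convex_halfSpace_le ⟨g.map_add, fun c x => g.map_smul c x⟩ 1).inter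
        (convex_halfSpace_ge ⟨g.map_add, fun c x => g.map_smul c x⟩ 1)
    exact convexHull_min hsub hconv hb
  have hnorm : ∀ p ∈ P, p = x ∨ ∃ α : ℝ, 0 < α ∧ ∃ b' ∈ B, p = x + α • b' := by
    intro p hp
    rw [hPdef, Finset.convexHull_eq] at hp
    obtain ⟨wt, hw0, hw1, hwc⟩ := hp
    have hpsum : p = ∑ q ∈ s, wt q • q := by
      rw [← hwc, Finset.centerMass_eq_of_sum_1 _ _ hw1]; rfl
    have hkey : p - x = ∑ q ∈ s.erase x, wt q • (q - x) := by
      have h1 : ∑ q ∈ s.erase x, wt q • (q - x) = ∑ q ∈ s, wt q • (q - x) :=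
        Finset.sum_erase _ (by simp)
      have h2 : ∑ q ∈ s, wt q • (q - x) = (∑ q ∈ s, wt q • q) - (∑ q ∈ s, wt q) • x := by
        rw [Finset.sum_smul, ← Finset.sum_sub_distrib]
        exact Finset.sum_congr rfl fun q _ => smul_sub _ _ _
      rw [h1, h2, hw1, one_smul, ← hpsum]
    set α := ∑ q ∈ s.erase x, wt q * g (q - x) with hαdef
    have hterm0 : ∀ q ∈ s.erase x, 0 ≤ wt q * g (q - x) := fun q hq =>
      mul_nonneg (hw0 q (Finset.mem_of_mem_erase hq)) (le_of_lt (hgpos q hq))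
    have hα0 : 0 ≤ α := Finset.sum_nonneg hterm0
    rcases eq_or_lt_of_le hα0 with hα | hα
    · left
      have hall : ∀ q ∈ s.erase x, wt q * g (q - x) = 0 :=
        (Finset.sum_eq_zero_iff_of_nonneg hterm0).mp hα.symm
      have hwz : ∀ q ∈ s.erase x, wt q = 0 := fun q hq => by
        rcases mul_eq_zero.mp (hall q hq) with h | h
        · exact h
        · exact absurd h (ne_of_gt (hgpos q hq))
      have hpx : p - x = 0 := by
        rw [hkey]
        exact Finset.sum_eq_zero fun q hq => by rw [hwz q hq, zero_smul]
      exact sub_eq_zero.mp hpx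
    · right
      refine ⟨α, hα, α⁻¹ • (p - x), ?_, ?_⟩
      · have hcm : (s.erase x).centerMass (fun q => wt q * g (q - x))
            (fun q => (g (q - x))⁻¹ • (q - x)) = α⁻¹ • (p - x) := by
          unfold Finset.centerMass
          have h2 : ∑ q ∈ s.erase x, (wt q * g (q - x)) • ((g (q - x))⁻¹ • (q - x))
              = ∑ q ∈ s.erase x, wt q • (q - x) :=
            Finset.sum_congr rfl fun q hq => by
              rw [smul_smul, mul_assoc, mul_inv_cancel₀ (ne_of_gt (hgpos q hq)), mul_one]
          rw [h2, ← hkey, ← hαdef]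
        rw [hBdef, ← hcm]
        exact Finset.centerMass_mem_convexHull _ hterm0 (by rw [← hαdef]; exact hα)
          (fun q hq => Finset.mem_coe.mpr (Finset.mem_image_of_mem _ hq))
      · rw [smul_smul, mul_inv_cancel₀ (ne_of_gt hα), one_smul]
        abel
  have hzx : z ≠ x := fun h => by rw [h] at hcz; exact lt_irrefl _ hcz
  rcases hnorm z hz with h | ⟨αz, hαz, bz, hbz, hzeq⟩
  · exact absurd h hzx
  have hcbz : 0 < dotv c bz := by
    have h1 : dotv c z = dotv c x + αz * dotv c bz := by
      rw [hzeq, dotv_add_right, dotv_smul_right]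
    nlinarith
  have hD'ne : D'.Nonempty := by
    have hBne : (convexHull ℝ (D' : Set (Fin n → ℝ))).Nonempty := ⟨bz, hbz⟩
    exact Finset.coe_nonempty.mp (convexHull_nonempty_iff.mp hBne)
  obtain ⟨b, hbB, hbmax⟩ := exists_extreme_maximizer hD'ne c
  have hbmem : b ∈ B := hbB.1
  have hcb : 0 < dotv c b := by
    have h1 : dotv c bz ≤ D'.sup' hD'ne (dotv c) := dotv_le_sup' hD'ne c hbz
    rw [hbmax]; linarith
  have hgb : g b = 1 := hgB b hbmem
  have hbne0 : b ≠ 0 := fun h => by rw [h] at hgb; simp at hgb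
  set St := {t : ℝ | 0 ≤ t ∧ x + t • b ∈ P} with hStdef
  have hcont : Continuous fun t : ℝ => x + t • b := continuous_const.add (continuous_id.smul continuous_const)
  have hStclosed : IsClosed St := by
    have he : St = Set.Ici (0:ℝ) ∩ (fun t : ℝ => x + t • b) ⁻¹' P := rfl
    rw [he]
    exact isClosed_Ici.inter (hPclosed.preimage hcont)
  obtain ⟨C, hC⟩ : ∃ C, ∀ p ∈ P, g p ≤ C := by
    obtain ⟨C, hC⟩ := (hPcomp.image g.continuous).bddAbove
    exact ⟨C, fun p hp => hC (Set.mem_image_of_mem _ hp)⟩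
  have hStsub : St ⊆ Set.Icc (0:ℝ) (C - g x) := by
    rintro t ⟨ht0, htP⟩
    refine ⟨ht0, ?_⟩
    have h1 : g (x + t • b) = g x + t := by simp [map_add, map_smul, hgb]
    have h2 := hC _ htP
    rw [h1] at h2
    linarith
  have hStcomp : IsCompact St := isCompact_Icc.of_isClosed_subset hStclosed hStsub
  have hBstep : B ⊆ {v : Fin n → ℝ | ∃ t : ℝ, 0 < t ∧ x + t • v ∈ P} := by
    rw [hBdef]
    apply convexHull_min
    · rintro v hv
      obtain ⟨p, hp, rfl⟩ := Finset.mem_image.mp (Finset.mem_coe.mp hv)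
      refine ⟨g (p - x), hgpos p hp, ?_⟩
      rw [smul_smul, mul_inv_cancel₀ (ne_of_gt (hgpos p hp)), one_smul]
      have he : x + (p - x) = p := by abel
      rw [he]
      exact subset_convexHull ℝ _ (Finset.mem_coe.mpr (Finset.mem_of_mem_erase hp))
    · rintro v1 hv1 v2 hv2 a1 a2 ha1 ha2 ha12
      obtain ⟨t1, ht1, hP1⟩ := hv1
      obtain ⟨t2, ht2, hP2⟩ := hv2
      rcases eq_or_lt_of_le ha1 with h1 | ha1pos
      · have h2 : a2 = 1 := by linarith
        refine ⟨t2, ht2, ?_⟩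
        rw [← h1, h2, zero_smul, one_smul, zero_add]
        exact hP2
      rcases eq_or_lt_of_le ha2 with h2 | ha2pos
      · have h1 : a1 = 1 := by linarith
        refine ⟨t1, ht1, ?_⟩
        rw [← h2, h1, zero_smul, one_smul, add_zero]
        exact hP1
      have hden : 0 < a1 / t1 + a2 / t2 := by positivity
      set t := (a1 / t1 + a2 / t2)⁻¹ with htdef
      have htpos : 0 < t := inv_pos.mpr hden
      have hsum : t * a1 / t1 + t * a2 / t2 = 1 := by
        rw [htdef]
        field_simp
      refine ⟨t, htpos, ?_⟩
      have hkey : x + t • (a1 • v1 + a2 • v2)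
          = (t * a1 / t1) • (x + t1 • v1) + (t * a2 / t2) • (x + t2 • v2) := by
        match_scalars
        · rw [mul_one, mul_one]; exact hsum.symm
        · field_simp
        · field_simp
      rw [hkey]
      exact hPconv hP1 hP2 (by positivity) (by positivity) hsum
  obtain ⟨t0, ht0, ht0P⟩ := hBstep hbmem
  have hStne : St.Nonempty := ⟨t0, le_of_lt ht0, ht0P⟩
  have hbdd : BddAbove St := ⟨C - g x, fun t ht => (hStsub ht).2⟩
  set T := sSup St with hTdef
  have hTmem : T ∈ St := hStcomp.sSup_mem hStne
  have hT0 : 0 < T := lt_of_lt_of_le ht0 (le_csSup hbdd ⟨le_of_lt ht0, ht0P⟩)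
  set y := x + T • b with hydef
  have hyP : y ∈ P := hTmem.2
  have hyne : y ≠ x := by
    intro h
    have h1 : T • b = 0 := by
      have h2 := congrArg (fun v => v - x) h
      simpa [hydef] using h2
    rcases smul_eq_zero.mp h1 with h' | h'
    · exact (ne_of_gt hT0) h'
    · exact hbne0 h'
  refine ⟨y, hyne, ⟨hPconv.segment_subset hxP hyP, ?_⟩, ?_⟩
  swap
  · rw [hydef, dotv_add_right, dotv_smul_right]
    nlinarith
  rintro p hp q hq ξ hξseg hξopen
  have hfin : ∀ β : ℝ, 0 ≤ β → x + β • b ∈ P → x + β • b ∈ segment ℝ x y := by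
    intro β h0 hP'
    have hβT : β ≤ T := le_csSup hbdd ⟨h0, hP'⟩
    have hd1 : β / T ≤ 1 := (div_le_one hT0).mpr hβT
    refine ⟨1 - β / T, β / T, by linarith, by positivity, by ring, ?_⟩
    rw [hydef]
    match_scalars
    · ring
    · field_simp
  obtain ⟨u1, u2, hu1, hu2, hu12, hxi⟩ := hξseg
  have hξx : ξ = x + (u2 * T) • b := by
    rw [← hxi, hydef]
    match_scalars
    · linarith
    · ring
  have hτ0 : 0 ≤ u2 * T := mul_nonneg hu2 (le_of_lt hT0)
  obtain ⟨a1, a2, ha1, ha2, ha12, hcombo⟩ := hξopen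
  rcases hnorm p hp with hpx | ⟨α, hα, b1, hb1, hpeq⟩ <;>
    rcases hnorm q hq with hqx | ⟨β, hβ, b2, hb2, hqeq⟩
  · exact by rw [hpx]; exact left_mem_segment ℝ x y
  · -- p = x, q = x + β • b2
    have hEq : (a2 * β) • b2 = (u2 * T) • b := by
      have h1 : a1 • p + a2 • q = x + (a2 * β) • b2 := by
        rw [hpx, hqeq]
        match_scalars
        · linarith
        · ring
      exact add_left_cancel (h1.symm.trans (hcombo.trans hξx))
    have hgEq : a2 * β = u2 * T := by
      have hg1 := congrArg g hEq
      simp only [map_smul, smul_eq_mul, hgb, hgB b2 hb2, mul_one] at hg1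
      exact hg1
    have hb2b : b2 = b :=
      smul_right_injective (Fin n → ℝ) (ne_of_gt (mul_pos ha2 hβ))
        (show (a2 * β) • b2 = (a2 * β) • b by rw [hEq, hgEq])
    rw [hpx]; exact left_mem_segment ℝ x y
  · -- q = x, p = x + α • b1
    have hEq : (a1 * α) • b1 = (u2 * T) • b := by
      have h1 : a1 • p + a2 • q = x + (a1 * α) • b1 := by
        rw [hpeq, hqx]
        match_scalars
        · linarith
        · ring
      exact add_left_cancel (h1.symm.trans (hcombo.trans hξx))
    have hgEq : a1 * α = u2 * T := by
      have hg1 := congrArg g hEq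
      simp only [map_smul, smul_eq_mul, hgb, hgB b1 hb1, mul_one] at hg1
      exact hg1
    have hb1b : b1 = b :=
      smul_right_injective (Fin n → ℝ) (ne_of_gt (mul_pos ha1 hα))
        (show (a1 * α) • b1 = (a1 * α) • b by rw [hEq, hgEq])
    rw [hpeq, hb1b]
    exact hfin α (le_of_lt hα) (by rw [← hb1b, ← hpeq]; exact hp)
  · -- p = x + α • b1, q = x + β • b2
    have hEq : (a1 * α) • b1 + (a2 * β) • b2 = (u2 * T) • b := by
      have h1 : a1 • p + a2 • q = x + ((a1 * α) • b1 + (a2 * β) • b2) := by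
        rw [hpeq, hqeq]
        match_scalars
        · linarith
        · ring
        · ring
      exact add_left_cancel (h1.symm.trans (hcombo.trans hξx))
    set τ := u2 * T with hτdef
    have hgEq : a1 * α + a2 * β = τ := by
      have hg1 := congrArg g hEq
      simp only [map_add, map_smul, smul_eq_mul, hgb, hgB b1 hb1, hgB b2 hb2, mul_one] at hg1
      exact hg1
    have hτpos : 0 < τ := by
      have h1 := mul_pos ha1 hα
      have h2 := mul_pos ha2 hβ
      linarith
    have hbcombo : (a1 * α / τ) • b1 + (a2 * β / τ) • b2 = b := by
      have h3 : τ⁻¹ • ((a1 * α) • b1 + (a2 * β) • b2) = τ⁻¹ • (τ • b) := by rw [hEq]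
      rw [smul_smul, inv_mul_cancel₀ (ne_of_gt hτpos), one_smul, smul_add, smul_smul,
        smul_smul] at h3
      rw [← h3]
      congr 1 <;> rw [div_eq_inv_mul]
    have hopen : b ∈ openSegment ℝ b1 b2 := by
      refine ⟨a1 * α / τ, a2 * β / τ, by positivity, by positivity, ?_, hbcombo⟩
      field_simp
      linarith
    have hb1b : b1 = b := hbB.2 hb1 hb2 hopen
    rw [hpeq, hb1b]
    exact hfin α (le_of_lt hα) (by rw [← hb1b, ← hpeq]; exact hp)


lemma dotv_ind_single (S : Finset (Fin n)) (j : Fin n) :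
    dotv (ind S) (Pi.single j (1:ℝ)) = if j ∈ S then (1:ℝ) else 0 := by
  rw [dotv_ind]
  simp [Pi.single_apply, Finset.sum_ite_eq]

lemma dotv_ind_root (S : Finset (Fin n)) (i j : Fin n) (c : ℝ) :
    dotv (ind S) (c • (Pi.single j (1:ℝ) - Pi.single i (1:ℝ)))
      = c * ((if j ∈ S then (1:ℝ) else 0) - (if i ∈ S then (1:ℝ) else 0)) := by
  rw [dotv_smul_right, dotv_sub_right, dotv_ind_single, dotv_ind_single]

/-- Common maximizer for a chain of indicator functionals, assuming all edges of the
polytope are parallel to roots. -/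
lemma chain_common_maximizer {s : Finset (Fin n → ℝ)} (hs : s.Nonempty)
    (hedge : ∀ x y : Fin n → ℝ, x ≠ y →
      IsExtreme ℝ (convexHull ℝ (s : Set (Fin n → ℝ))) (segment ℝ x y) →
        ∃ (i j : Fin n) (c : ℝ), y - x = c • (Pi.single j (1 : ℝ) - Pi.single i (1 : ℝ)))
    (𝒞 : Finset (Finset (Fin n)))
    (hchain : ∀ S ∈ 𝒞, ∀ S' ∈ 𝒞, S ⊆ S' ∨ S' ⊆ S) :
    ∃ x ∈ convexHull ℝ (s : Set (Fin n → ℝ)),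
      ∀ S ∈ 𝒞, dotv (ind S) x = s.sup' hs (dotv (ind S)) := by
  classical
  set w : Fin n → ℝ := fun i => ∑ S ∈ 𝒞, (4:ℝ)^(S.card) * (if i ∈ S then 1 else 0) with hwdef
  obtain ⟨x, hxext, hxmax⟩ := exists_extreme_maximizer hs w
  refine ⟨x, hxext.1, ?_⟩
  by_contra hbad
  push_neg at hbad
  obtain ⟨S₀, hS₀mem, hS₀ne⟩ := hbad
  have hxle : dotv (ind S₀) x ≤ s.sup' hs (dotv (ind S₀)) := dotv_le_sup' hs _ hxext.1
  have hlt : dotv (ind S₀) x < s.sup' hs (dotv (ind S₀)) := lt_of_le_of_ne hxle hS₀ne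
  obtain ⟨p, hps, hpeq⟩ := Finset.exists_mem_eq_sup' hs (dotv (ind S₀))
  have hpz : dotv (ind S₀) x < dotv (ind S₀) p := by rw [← hpeq]; exact hlt
  obtain ⟨y, hyne, hyext, hyimp⟩ :=
    exists_improving_edge hxext (subset_convexHull ℝ _ hps) hpz
  obtain ⟨i, j, c, hyx⟩ := hedge x y (Ne.symm hyne) hyext
  have hform : ∀ S : Finset (Fin n), dotv (ind S) (y - x)
      = c * ((if j ∈ S then (1:ℝ) else 0) - (if i ∈ S then (1:ℝ) else 0)) := fun S => by
    rw [hyx, dotv_ind_root]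
  have himp : 0 < dotv (ind S₀) (y - x) := by
    rw [dotv_sub_right]; linarith
  have hsign : (0 < c ∧ j ∈ S₀ ∧ i ∉ S₀) ∨ (c < 0 ∧ i ∈ S₀ ∧ j ∉ S₀) := by
    rw [hform S₀] at himp
    by_cases hj : j ∈ S₀ <;> by_cases hi : i ∈ S₀ <;> simp [hj, hi] at himp
    · exact Or.inl ⟨himp, hj, hi⟩
    · exact Or.inr ⟨himp, hi, hj⟩
  have hge : |c| ≤ dotv (ind S₀) (y - x) := by
    rw [hform S₀]
    rcases hsign with ⟨hc, hj, hi⟩ | ⟨hc, hi, hj⟩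
    · simp [hj, hi, abs_of_pos hc]
    · simp [hj, hi, abs_of_neg hc]
  have hmono : ∀ S ∈ 𝒞, S₀ ⊆ S → 0 ≤ dotv (ind S) (y - x) := by
    intro S _ hsub
    rw [hform S]
    rcases hsign with ⟨hc, hj, _⟩ | ⟨hc, hi, _⟩
    · have hjS : j ∈ S := hsub hj
      by_cases hiS : i ∈ S <;> simp [hjS, hiS] <;> positivity
    · have hiS : i ∈ S := hsub hi
      by_cases hjS : j ∈ S <;> simp [hjS, hiS] <;> nlinarith
  have hlow : ∀ S : Finset (Fin n), -|c| ≤ dotv (ind S) (y - x) := by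
    intro S
    have habs : |dotv (ind S) (y - x)| ≤ |c| := by
      rw [hform S, abs_mul]
      have he : |(if j ∈ S then (1:ℝ) else 0) - (if i ∈ S then (1:ℝ) else 0)| ≤ 1 := by
        by_cases hjS : j ∈ S <;> by_cases hiS : i ∈ S <;> simp [hjS, hiS]
      nlinarith [abs_nonneg c, abs_nonneg ((if j ∈ S then (1:ℝ) else 0) - (if i ∈ S then (1:ℝ) else 0))]
    linarith [neg_abs_le (dotv (ind S) (y - x)), abs_le.mp habs]
  -- expansion of dotv w
  have hwsum : ∀ v : Fin n → ℝ, dotv w v = ∑ S ∈ 𝒞, (4:ℝ)^(S.card) * dotv (ind S) v := by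
    intro v
    simp only [dotv, ind, hwdef]
    simp_rw [Finset.sum_mul, mul_assoc]
    rw [Finset.sum_comm]
    simp_rw [← Finset.mul_sum]
  -- final contradiction
  have hyP : y ∈ convexHull ℝ (s : Set (Fin n → ℝ)) := hyext.1 (right_mem_segment ℝ x y)
  have hwle : dotv w y ≤ s.sup' hs (dotv w) := dotv_le_sup' hs w hyP
  have hwd : dotv w (y - x) ≤ 0 := by
    rw [dotv_sub_right]; linarith [hxmax]
  have hcpos : 0 < |c| := by
    rcases hsign with ⟨hc, _, _⟩ | ⟨hc, _, _⟩
    · exact abs_pos.mpr (ne_of_gt hc)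
    · exact abs_pos.mpr (ne_of_lt hc)
  set k := S₀.card with hkdef
  set filt₁ := 𝒞.filter (fun S => S₀ ⊆ S) with hf1
  set filt₂ := 𝒞.filter (fun S => ¬ S₀ ⊆ S) with hf2
  have hsplit : dotv w (y - x)
      = (∑ S ∈ filt₁, (4:ℝ)^(S.card) * dotv (ind S) (y - x))
        + ∑ S ∈ filt₂, (4:ℝ)^(S.card) * dotv (ind S) (y - x) := by
    rw [hwsum (y - x)]
    exact (Finset.sum_filter_add_sum_filter_not 𝒞 _ _).symm
  have h1 : (4:ℝ)^k * |c| ≤ ∑ S ∈ filt₁, (4:ℝ)^(S.card) * dotv (ind S) (y - x) := by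
    have hmem : S₀ ∈ filt₁ := Finset.mem_filter.mpr ⟨hS₀mem, subset_rfl⟩
    have hterm : (4:ℝ)^k * |c| ≤ (4:ℝ)^(S₀.card) * dotv (ind S₀) (y - x) := by
      rw [hkdef]
      have h4 : (0:ℝ) < 4 ^ S₀.card := by positivity
      nlinarith
    refine le_trans hterm
      (Finset.single_le_sum (f := fun S => (4:ℝ)^(S.card) * dotv (ind S) (y - x)) ?_ hmem)
    intro S hS
    obtain ⟨hSC, hsub⟩ := Finset.mem_filter.mp hS
    exact mul_nonneg (by positivity) (hmono S hSC hsub)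
  have hcard : ∀ S ∈ filt₂, S.card < k := by
    intro S hS
    obtain ⟨hSC, hnsub⟩ := Finset.mem_filter.mp hS
    have hsub : S ⊆ S₀ := (hchain S₀ hS₀mem S hSC).resolve_left hnsub
    have hss : S ⊂ S₀ := HasSubset.Subset.ssubset_of_ne hsub (fun h => hnsub (h ▸ subset_rfl))
    exact Finset.card_lt_card hss
  have hsum4 : ∑ S ∈ filt₂, (4:ℝ)^(S.card) ≤ ((4:ℝ)^k - 1)/3 := by
    have hinj : ∀ S ∈ filt₂, ∀ S' ∈ filt₂, S.card = S'.card → S = S' := by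
      intro S hS S' hS'
      intro hcc
      obtain ⟨hSC, _⟩ := Finset.mem_filter.mp hS
      obtain ⟨hSC', _⟩ := Finset.mem_filter.mp hS'
      rcases hchain S hSC S' hSC' with h | h
      · exact Finset.eq_of_subset_of_card_le h (le_of_eq hcc.symm)
      · exact (Finset.eq_of_subset_of_card_le h (le_of_eq hcc)).symm
    have himg : ∑ S ∈ filt₂, (4:ℝ)^(S.card) = ∑ r ∈ filt₂.image Finset.card, (4:ℝ)^r :=
      (Finset.sum_image hinj).symm
    have hsub : filt₂.image Finset.card ⊆ Finset.range k := by
      intro r hr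
      obtain ⟨S, hS, rfl⟩ := Finset.mem_image.mp hr
      exact Finset.mem_range.mpr (hcard S hS)
    have hle : ∑ r ∈ filt₂.image Finset.card, (4:ℝ)^r ≤ ∑ r ∈ Finset.range k, (4:ℝ)^r :=
      Finset.sum_le_sum_of_subset_of_nonneg hsub (fun r _ _ => by positivity)
    have hgeom : ∑ r ∈ Finset.range k, (4:ℝ)^r = ((4:ℝ)^k - 1)/3 := by
      rw [geom_sum_eq (by norm_num : (4:ℝ) ≠ 1) k]
      norm_num
    rw [himg]
    linarith
  have h2 : -(((4:ℝ)^k - 1)/3 * |c|) ≤ ∑ S ∈ filt₂, (4:ℝ)^(S.card) * dotv (ind S) (y - x) := by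
    have hterm : ∀ S ∈ filt₂, -((4:ℝ)^(S.card) * |c|) ≤ (4:ℝ)^(S.card) * dotv (ind S) (y - x) := by
      intro S _
      have hl := hlow S
      have h4 : (0:ℝ) < 4 ^ S.card := by positivity
      nlinarith
    have hstep : ∑ S ∈ filt₂, -((4:ℝ)^(S.card) * |c|) ≤ ∑ S ∈ filt₂, (4:ℝ)^(S.card) * dotv (ind S) (y - x) :=
      Finset.sum_le_sum hterm
    have heq : ∑ S ∈ filt₂, -((4:ℝ)^(S.card) * |c|) = -((∑ S ∈ filt₂, (4:ℝ)^(S.card)) * |c|) := by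
      rw [Finset.sum_mul]
      exact Finset.sum_neg_distrib _
    have hmul : (∑ S ∈ filt₂, (4:ℝ)^(S.card)) * |c| ≤ ((4:ℝ)^k - 1)/3 * |c| :=
      mul_le_mul_of_nonneg_right hsum4 (abs_nonneg c)
    calc -(((4:ℝ)^k - 1)/3 * |c|) ≤ -((∑ S ∈ filt₂, (4:ℝ)^(S.card)) * |c|) := by linarith
      _ = ∑ S ∈ filt₂, -((4:ℝ)^(S.card) * |c|) := heq.symm
      _ ≤ _ := hstep
  have hfinal : 0 < dotv w (y - x) := by
    rw [hsplit]
    have h4 : (0:ℝ) < 4 ^ k := by positivity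
    nlinarith
  linarith


/-- On a polytope all of whose edges are roots, the coordinate sum is constant. -/
lemma sum_const {s : Finset (Fin n → ℝ)} (hs : s.Nonempty)
    (hedge : ∀ x y : Fin n → ℝ, x ≠ y →
      IsExtreme ℝ (convexHull ℝ (s : Set (Fin n → ℝ))) (segment ℝ x y) →
        ∃ (i j : Fin n) (c : ℝ), y - x = c • (Pi.single j (1 : ℝ) - Pi.single i (1 : ℝ))) :
    ∀ x ∈ convexHull ℝ (s : Set (Fin n → ℝ)),
      dotv (ind Finset.univ) x = s.sup' hs (dotv (ind Finset.univ)) := by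
  obtain ⟨x₀, hxext, hxmax⟩ := exists_extreme_maximizer hs (-(ind Finset.univ))
  have hneg : ∀ v : Fin n → ℝ, dotv (-(ind Finset.univ)) v = -dotv (ind Finset.univ) v := by
    intro v
    simp [dotv, Finset.sum_neg_distrib]
  have hx₀max : dotv (ind Finset.univ) x₀ = s.sup' hs (dotv (ind Finset.univ)) := by
    by_contra hne
    have hle := dotv_le_sup' hs (ind Finset.univ) hxext.1
    obtain ⟨p, hps, hpeq⟩ := Finset.exists_mem_eq_sup' hs (dotv (ind Finset.univ))
    have hpz : dotv (ind Finset.univ) x₀ < dotv (ind Finset.univ) p := by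
      rw [← hpeq]; exact lt_of_le_of_ne hle hne
    obtain ⟨y, hyne, hyext, hyimp⟩ :=
      exists_improving_edge hxext (subset_convexHull ℝ _ hps) hpz
    obtain ⟨i, j, c, hyx⟩ := hedge x₀ y (Ne.symm hyne) hyext
    have h0 : dotv (ind Finset.univ) (y - x₀) = 0 := by
      rw [hyx, dotv_ind_root]; simp
    rw [dotv_sub_right] at h0; linarith
  intro x hx
  have h1 : dotv (-(ind Finset.univ)) x ≤ s.sup' hs (dotv (-(ind Finset.univ))) :=
    dotv_le_sup' hs _ hx
  rw [← hxmax, hneg, hneg] at h1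
  have h2 : dotv (ind Finset.univ) x ≤ s.sup' hs (dotv (ind Finset.univ)) :=
    dotv_le_sup' hs _ hx
  linarith

/-- threshold sets of a weight vector. -/
noncomputable def thr (w : Fin n → ℝ) (v : ℝ) : Finset (Fin n) := Finset.univ.filter (fun i => v ≤ w i)

/-- Key bound: if `z` satisfies all polymatroid inequalities (with equality for the
ground set) and `x` is a common maximizer of all threshold sets of `w`, then
`dotv w z ≤ dotv w x`. By induction on the number of distinct values of `w`. -/
lemma threshold_bound {s : Finset (Fin n → ℝ)} (hs : s.Nonempty) {z : Fin n → ℝ}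
    (hz1 : ∀ U : Finset (Fin n), dotv (ind U) z ≤ s.sup' hs (dotv (ind U)))
    (hz2 : dotv (ind Finset.univ) z = s.sup' hs (dotv (ind Finset.univ)))
    (hconst : ∀ x ∈ convexHull ℝ (s : Set (Fin n → ℝ)),
      dotv (ind Finset.univ) x = s.sup' hs (dotv (ind Finset.univ))) :
    ∀ m : ℕ, ∀ w : Fin n → ℝ, (Finset.univ.image w).card ≤ m →
      ∀ x ∈ convexHull ℝ (s : Set (Fin n → ℝ)),
      (∀ v ∈ Finset.univ.image w,
         dotv (ind (thr w v)) x = s.sup' hs (dotv (ind (thr w v)))) →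
      dotv w z ≤ dotv w x := by
  classical
  intro m
  induction m with
  | zero =>
    intro w hcard x hx hmax
    have himg : (Finset.univ.image w) = ∅ := Finset.card_eq_zero.mp (Nat.le_zero.mp hcard)
    have huniv : (Finset.univ : Finset (Fin n)) = ∅ := by
      by_contra h
      obtain ⟨i, hi⟩ := Finset.nonempty_iff_ne_empty.mpr h
      have : w i ∈ Finset.univ.image w := Finset.mem_image_of_mem w hi
      rw [himg] at this
      exact absurd this (Finset.notMem_empty _)
    simp [dotv, huniv]
  | succ m ih =>
    intro w hcard x hx hmax
    by_cases hsmall : (Finset.univ.image w).card ≤ m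
    · exact ih w hsmall x hx hmax
    push_neg at hsmall
    have hcardeq : (Finset.univ.image w).card = m + 1 := le_antisymm hcard hsmall
    rcases Nat.lt_or_ge (Finset.univ.image w).card 2 with hlt2 | hge2
    · -- w is constant
      have hone : (Finset.univ.image w).card = 1 := by omega
      obtain ⟨v, hv⟩ := Finset.card_eq_one.mp hone
      have hwc : ∀ i, w i = v := by
        intro i
        have h1 : w i ∈ Finset.univ.image w := Finset.mem_image_of_mem w (Finset.mem_univ i)
        rw [hv] at h1
        exact Finset.mem_singleton.mp h1
      have hdv : ∀ y : Fin n → ℝ, dotv w y = v * dotv (ind Finset.univ) y := by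
        intro y
        simp [dotv, hwc, ind, Finset.mul_sum]
      rw [hdv, hdv, hz2, hconst x hx]
    · -- at least two values
      set V := Finset.univ.image w with hV
      have hVne : V.Nonempty := Finset.card_pos.mp (by omega)
      set v₁ := V.min' hVne with hv₁
      have hv₁min : ∀ i, v₁ ≤ w i := fun i =>
        Finset.min'_le V _ (Finset.mem_image_of_mem w (Finset.mem_univ i))
      have hv₁mem : v₁ ∈ V := V.min'_mem hVne
      set V₂ := V.filter (fun v => v₁ < v) with hV₂
      have hV₂ne : V₂.Nonempty := by
        obtain ⟨v, hv, hne⟩ := Finset.exists_mem_ne hge2 v₁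
        exact ⟨v, Finset.mem_filter.mpr ⟨hv, lt_of_le_of_ne (V.min'_le v hv) (Ne.symm hne)⟩⟩
      set v₂ := V₂.min' hV₂ne with hv₂def
      have hv₂mem : v₂ ∈ V ∧ v₁ < v₂ := Finset.mem_filter.mp (V₂.min'_mem hV₂ne)
      set δ := v₂ - v₁ with hδ
      have hδpos : 0 < δ := sub_pos.mpr hv₂mem.2
      set A := thr w v₂ with hA
      have hmemA : ∀ i, i ∈ A ↔ v₂ ≤ w i := by
        intro i; rw [hA]; unfold thr; simp
      have hwA : ∀ i, i ∉ A → w i = v₁ := by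
        intro i hi
        rw [hmemA] at hi
        by_contra hne
        have hgt : v₁ < w i := lt_of_le_of_ne (hv₁min i) (Ne.symm hne)
        have h1 : w i ∈ V₂ := Finset.mem_filter.mpr
          ⟨Finset.mem_image_of_mem w (Finset.mem_univ i), hgt⟩
        exact hi (V₂.min'_le _ h1)
      set w' : Fin n → ℝ := fun i => w i - δ * (if i ∈ A then 1 else 0) with hw'
      have hsplitw : ∀ y : Fin n → ℝ, dotv w y = dotv w' y + δ * dotv (ind A) y := by
        intro y
        simp only [dotv, ind, hw', Finset.mul_sum, ← Finset.sum_add_distrib]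
        exact Finset.sum_congr rfl fun i _ => by ring
      -- values of w'
      have hw'val : ∀ i, (i ∉ A → w' i = v₁) ∧ (i ∈ A → w' i = w i - δ) := by
        intro i
        constructor
        · intro hi; simp [hw', if_neg hi, hwA i hi]
        · intro hi; simp [hw', if_pos hi]
      have hw'ge : ∀ i, v₁ ≤ w' i := by
        intro i
        by_cases hi : i ∈ A
        · rw [(hw'val i).2 hi]
          have := (hmemA i).mp hi
          rw [hδ]; linarith
        · rw [(hw'val i).1 hi]
      -- threshold sets of w' are threshold sets of w
      have hthr : ∀ v' ∈ Finset.univ.image w', ∃ v ∈ V, thr w' v' = thr w v := by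
        intro v' hv'
        obtain ⟨i₀, _, hi₀⟩ := Finset.mem_image.mp hv'
        rcases le_or_gt v' v₁ with hle | hgt
        · refine ⟨v₁, hv₁mem, ?_⟩
          unfold thr
          ext i
          simp only [Finset.mem_filter, Finset.mem_univ, true_and]
          constructor
          · intro _; exact hv₁min i
          · intro _; exact le_trans hle (hw'ge i)
        · have hi₀A : i₀ ∈ A := by
            by_contra h
            rw [(hw'val i₀).1 h] at hi₀
            rw [← hi₀] at hgt
            exact lt_irrefl _ hgt
          have hval : v' = w i₀ - δ := by rw [← hi₀, (hw'val i₀).2 hi₀A]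
          refine ⟨w i₀, Finset.mem_image_of_mem w (Finset.mem_univ i₀), ?_⟩
          have hwi₀ : w i₀ = v' + δ := by rw [hval]; ring
          rw [hwi₀]
          unfold thr
          ext i
          simp only [Finset.mem_filter, Finset.mem_univ, true_and]
          by_cases hi : i ∈ A
          · rw [(hw'val i).2 hi]
            constructor <;> intro h <;> linarith
          · rw [(hw'val i).1 hi, hwA i hi]
            constructor <;> intro h <;> linarith
      -- the new weight has fewer values
      have hcard' : (Finset.univ.image w').card ≤ m := by
        have hsub : Finset.univ.image w' ⊆
            insert v₁ ((V.filter (fun v => v₂ < v)).image (fun v => v - δ)) := by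
          intro v' hv'
          obtain ⟨i₀, _, hi₀⟩ := Finset.mem_image.mp hv'
          by_cases hi : i₀ ∈ A
          · rcases eq_or_lt_of_le ((hmemA i₀).mp hi) with heq | hlt
            · have : v' = v₁ := by
                rw [← hi₀, (hw'val i₀).2 hi, ← heq, hδ]; ring
              rw [this]; exact Finset.mem_insert_self _ _
            · refine Finset.mem_insert_of_mem (Finset.mem_image.mpr ⟨w i₀, ?_, ?_⟩)
              · exact Finset.mem_filter.mpr
                  ⟨Finset.mem_image_of_mem w (Finset.mem_univ i₀), hlt⟩
              · rw [← hi₀, (hw'val i₀).2 hi]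
          · have : v' = v₁ := by rw [← hi₀, (hw'val i₀).1 hi]
            rw [this]; exact Finset.mem_insert_self _ _
        have h1 : (Finset.univ.image w').card ≤
            ((V.filter (fun v => v₂ < v)).image (fun v => v - δ)).card + 1 := by
          calc (Finset.univ.image w').card
              ≤ (insert v₁ ((V.filter (fun v => v₂ < v)).image (fun v => v - δ))).card :=
                Finset.card_le_card hsub
            _ ≤ _ := Finset.card_insert_le _ _
        have h2 : ((V.filter (fun v => v₂ < v)).image (fun v => v - δ)).card ≤
            (V.filter (fun v => v₂ < v)).card := Finset.card_image_le
        have h3 : V.filter (fun v => v₂ < v) ⊆ (V.erase v₁).erase v₂ := by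
          intro v hv
          obtain ⟨hvV, hvgt⟩ := Finset.mem_filter.mp hv
          refine Finset.mem_erase.mpr ⟨ne_of_gt hvgt, Finset.mem_erase.mpr ⟨?_, hvV⟩⟩
          have := hv₂mem.2
          intro h; rw [h] at hvgt; linarith
        have h4 : ((V.erase v₁).erase v₂).card = V.card - 2 := by
          rw [Finset.card_erase_of_mem (Finset.mem_erase.mpr ⟨ne_of_gt hv₂mem.2, hv₂mem.1⟩),
            Finset.card_erase_of_mem hv₁mem]
          omega
        have h5 : (V.filter (fun v => v₂ < v)).card ≤ V.card - 2 := by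
          rw [← h4]; exact Finset.card_le_card h3
        have hVcard : V.card = m + 1 := hcardeq
        omega
      -- maximality of x for thresholds of w'
      have hmax' : ∀ v' ∈ Finset.univ.image w',
          dotv (ind (thr w' v')) x = s.sup' hs (dotv (ind (thr w' v'))) := by
        intro v' hv'
        obtain ⟨v, hvV, heq⟩ := hthr v' hv'
        rw [heq]
        exact hmax v hvV
      have hih : dotv w' z ≤ dotv w' x := ih w' hcard' x hx hmax'
      -- A is a threshold set of w at value v₂ ∈ V
      have hAmax : dotv (ind A) x = s.sup' hs (dotv (ind A)) := hmax v₂ hv₂mem.1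
      have hAz : dotv (ind A) z ≤ dotv (ind A) x := by
        rw [hAmax]; exact hz1 A
      rw [hsplitw z, hsplitw x]
      nlinarith


lemma forward {s : Finset (Fin n → ℝ)} (hs : s.Nonempty)
    (hedge : ∀ x y : Fin n → ℝ, x ≠ y →
      IsExtreme ℝ (convexHull ℝ (s : Set (Fin n → ℝ))) (segment ℝ x y) →
        ∃ (i j : Fin n) (c : ℝ), y - x = c • (Pi.single j (1 : ℝ) - Pi.single i (1 : ℝ))) :
    ∃ f : Finset (Fin n) → ℝ,
      (∀ T U : Finset (Fin n), f (T ∩ U) + f (T ∪ U) ≤ f T + f U) ∧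
      convexHull ℝ (s : Set (Fin n → ℝ)) = {x : Fin n → ℝ |
        (∀ U : Finset (Fin n), ∑ i ∈ U, x i ≤ f U) ∧ ∑ i, x i = f Finset.univ} := by
  classical
  refine ⟨fun U => s.sup' hs (dotv (ind U)), ?_, ?_⟩
  · intro T U
    set 𝒞 : Finset (Finset (Fin n)) := {T ∩ U, T ∪ U} with h𝒞
    have hchain : ∀ S ∈ 𝒞, ∀ S' ∈ 𝒞, S ⊆ S' ∨ S' ⊆ S := by
      have hTU : T ∩ U ⊆ T ∪ U := Finset.inter_subset_left.trans Finset.subset_union_left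
      intro S hS S' hS'
      simp only [h𝒞, Finset.mem_insert, Finset.mem_singleton] at hS hS'
      rcases hS with h | h <;>
        rcases hS' with h' | h' <;>
          subst h <;> subst h'
      · exact Or.inl subset_rfl
      · exact Or.inl hTU
      · exact Or.inr hTU
      · exact Or.inl subset_rfl
    obtain ⟨x, hxP, hxmax⟩ := chain_common_maximizer hs hedge 𝒞 hchain
    have h1 : dotv (ind (T ∩ U)) x = s.sup' hs (dotv (ind (T ∩ U))) :=
      hxmax _ (Finset.mem_insert_self _ _)
    have h2 : dotv (ind (T ∪ U)) x = s.sup' hs (dotv (ind (T ∪ U))) :=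
      hxmax _ (Finset.mem_insert_of_mem (Finset.mem_singleton_self _))
    have hsum : dotv (ind (T ∪ U)) x + dotv (ind (T ∩ U)) x
        = dotv (ind T) x + dotv (ind U) x := by
      simp only [dotv_ind]
      exact Finset.sum_union_inter
    have hT := dotv_le_sup' hs (ind T) hxP
    have hU := dotv_le_sup' hs (ind U) hxP
    linarith
  · ext p
    simp only [Set.mem_setOf_eq]
    constructor
    · intro hp
      constructor
      · intro U
        have h := dotv_le_sup' hs (ind U) hp
        rw [dotv_ind] at h
        exact h
      · have h := sum_const hs hedge p hp
        rw [dotv_ind] at h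
        exact h
    · rintro ⟨hp1, hp2⟩
      by_contra hnot
      obtain ⟨g, u, hub, hgu⟩ := geometric_hahn_banach_closed_point
        (convex_convexHull ℝ _) ((s.finite_toSet).isClosed_convexHull ℝ) hnot
      set w : Fin n → ℝ := fun i => g (Pi.single i 1) with hw
      have hgdot : ∀ y : Fin n → ℝ, g y = dotv w y := by
        intro y
        have hy : y = ∑ i, y i • (Pi.single i (1:ℝ) : Fin n → ℝ) := by
          ext j
          rw [Finset.sum_apply]
          simp [Pi.single_apply, mul_ite, Finset.sum_ite_eq]
        calc g y = g (∑ i, y i • (Pi.single i (1:ℝ) : Fin n → ℝ)) := by rw [← hy]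
          _ = ∑ i, y i * g ((Pi.single i (1:ℝ) : Fin n → ℝ)) := by
              rw [map_sum]
              exact Finset.sum_congr rfl fun i _ => by
                rw [map_smul]; rfl
          _ = dotv w y := by
              simp only [dotv, hw]
              exact Finset.sum_congr rfl fun i _ => mul_comm _ _
      set 𝒞 := (Finset.univ.image w).image (thr w) with h𝒞
      have hchain : ∀ S ∈ 𝒞, ∀ S' ∈ 𝒞, S ⊆ S' ∨ S' ⊆ S := by
        intro S hS S' hS'
        obtain ⟨v, _, rfl⟩ := Finset.mem_image.mp hS
        obtain ⟨v', _, rfl⟩ := Finset.mem_image.mp hS'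
        rcases le_total v v' with h | h
        · refine Or.inr fun i hi => ?_
          unfold thr at *
          simp only [Finset.mem_filter, Finset.mem_univ, true_and] at *
          linarith
        · refine Or.inl fun i hi => ?_
          unfold thr at *
          simp only [Finset.mem_filter, Finset.mem_univ, true_and] at *
          linarith
      obtain ⟨x₀, hx₀P, hx₀max⟩ := chain_common_maximizer hs hedge 𝒞 hchain
      have hmax : ∀ v ∈ Finset.univ.image w,
          dotv (ind (thr w v)) x₀ = s.sup' hs (dotv (ind (thr w v))) := fun v hv =>
        hx₀max _ (Finset.mem_image_of_mem _ hv)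
      have hz1 : ∀ U : Finset (Fin n), dotv (ind U) p ≤ s.sup' hs (dotv (ind U)) := by
        intro U; rw [dotv_ind]; exact hp1 U
      have hz2 : dotv (ind Finset.univ) p = s.sup' hs (dotv (ind Finset.univ)) := by
        rw [dotv_ind]; exact hp2
      have hbound := threshold_bound hs hz1 hz2 (sum_const hs hedge)
        (Finset.univ.image w).card w le_rfl x₀ hx₀P hmax
      have hc1 : dotv w x₀ < u := by rw [← hgdot]; exact hub x₀ hx₀P
      have hc2 : u < dotv w p := by rw [← hgdot]; exact hgu
      linarith


lemma backward (f : Finset (Fin n) → ℝ)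
    (hsubm : ∀ T U : Finset (Fin n), f (T ∩ U) + f (T ∪ U) ≤ f T + f U)
    {P : Set (Fin n → ℝ)}
    (hPeq : P = {x : Fin n → ℝ | (∀ U : Finset (Fin n), ∑ i ∈ U, x i ≤ f U) ∧
      ∑ i, x i = f Finset.univ})
    {x y : Fin n → ℝ} (hxy : x ≠ y) (hext : IsExtreme ℝ P (segment ℝ x y)) :
    ∃ (i j : Fin n) (c : ℝ), y - x = c • (Pi.single j (1:ℝ) - Pi.single i (1:ℝ)) := by
  classical
  have hmem : ∀ p ∈ P, (∀ U : Finset (Fin n), ∑ i ∈ U, p i ≤ f U) ∧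
      ∑ i, p i = f Finset.univ := by
    intro p hp; rw [hPeq] at hp; exact hp
  set m : Fin n → ℝ := (1/2 : ℝ) • (x + y) with hmdef
  have hm_seg : m ∈ segment ℝ x y :=
    ⟨1/2, 1/2, by norm_num, by norm_num, by norm_num, by rw [hmdef]; module⟩
  have hxP : x ∈ P := hext.1 (left_mem_segment ℝ x y)
  have hyP : y ∈ P := hext.1 (right_mem_segment ℝ x y)
  have hmP : m ∈ P := hext.1 hm_seg
  have hm1 := (hmem m hmP).1
  have hm2 := (hmem m hmP).2
  have hx1 := (hmem x hxP).1
  have hy1 := (hmem y hyP).1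
  have hsum_m : ∀ U : Finset (Fin n), ∑ i ∈ U, m i
      = ((∑ i ∈ U, x i) + ∑ i ∈ U, y i)/2 := by
    intro U
    rw [← Finset.sum_add_distrib, Finset.sum_div]
    refine Finset.sum_congr rfl fun i _ => ?_
    rw [hmdef]
    simp
    ring
  set Tt : Finset (Fin n) → Prop := fun U => ∑ i ∈ U, m i = f U with hTt
  have t_univ : Tt Finset.univ := hm2
  have txy : ∀ U, Tt U → (∑ i ∈ U, x i = f U ∧ ∑ i ∈ U, y i = f U) := by
    intro U hU
    rw [hTt] at hU
    have h1 := hx1 U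
    have h2 := hy1 U
    have h3 := hsum_m U
    constructor <;> linarith
  have td : ∀ U, Tt U → ∑ i ∈ U, (y i - x i) = 0 := by
    intro U hU
    rw [Finset.sum_sub_distrib, (txy U hU).1, (txy U hU).2, sub_self]
  have tclose : ∀ U V, Tt U → Tt V → Tt (U ∩ V) ∧ Tt (U ∪ V) := by
    intro U V hU hV
    have hb := hsubm U V
    have h1 := hm1 (U ∩ V)
    have h2 := hm1 (U ∪ V)
    have h3 : (∑ i ∈ U ∪ V, m i) + ∑ i ∈ U ∩ V, m i
        = (∑ i ∈ U, m i) + ∑ i ∈ V, m i := Finset.sum_union_inter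
    rw [hTt] at hU hV ⊢
    constructor <;> · simp only []; linarith
  -- a uniform slack
  obtain ⟨ε, hεpos, hεslack⟩ : ∃ ε : ℝ, 0 < ε ∧
      ∀ U : Finset (Fin n), ¬ Tt U → (∑ i ∈ U, m i) + ε ≤ f U := by
    set bad := Finset.univ.filter (fun U : Finset (Fin n) => ¬ Tt U) with hbad
    by_cases hb : bad.Nonempty
    · set img := bad.image (fun U => f U - ∑ i ∈ U, m i) with himg
      have himgne : img.Nonempty := hb.image _
      refine ⟨img.min' himgne, ?_, ?_⟩
      · obtain ⟨U, hU, hUe⟩ := Finset.mem_image.mp (img.min'_mem himgne)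
        rw [← hUe]
        have hU' : ¬ Tt U := (Finset.mem_filter.mp hU).2
        have := hm1 U
        rw [hTt] at hU'
        exact sub_pos.mpr (lt_of_le_of_ne this hU')
      · intro U hU
        have hUb : U ∈ bad := Finset.mem_filter.mpr ⟨Finset.mem_univ _, hU⟩
        have := img.min'_le _ (Finset.mem_image_of_mem _ hUb)
        linarith
    · refine ⟨1, one_pos, ?_⟩
      intro U hU
      exfalso
      exact hb ⟨U, Finset.mem_filter.mpr ⟨Finset.mem_univ _, hU⟩⟩
  -- key geometric step
  have hpair : ∀ i j : Fin n, i ≠ j → (∀ U, Tt U → (i ∈ U ↔ j ∈ U)) →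
      ∃ r : ℝ, (Pi.single i (1:ℝ) - Pi.single j (1:ℝ) : Fin n → ℝ) = r • (y - x) := by
    intro i j hij hiff
    set v : Fin n → ℝ := Pi.single i (1:ℝ) - Pi.single j (1:ℝ) with hv
    have hvU : ∀ U : Finset (Fin n), ∑ k ∈ U, v k
        = (if i ∈ U then (1:ℝ) else 0) - (if j ∈ U then (1:ℝ) else 0) := by
      intro U
      rw [← dotv_ind, hv, dotv_sub_right, dotv_ind_single, dotv_ind_single]
    have hvabs : ∀ U : Finset (Fin n), |∑ k ∈ U, v k| ≤ 1 := by
      intro U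
      rw [hvU]
      by_cases h1 : i ∈ U <;> by_cases h2 : j ∈ U <;> simp [h1, h2]
    have hmem' : ∀ σ : ℝ, σ = 1 ∨ σ = -1 → m + (σ * ε) • v ∈ P := by
      intro σ hσ
      rw [hPeq]
      have habs : |σ * ε| = ε := by
        rcases hσ with h | h <;> rw [h] <;> simp [abs_of_pos hεpos]
      constructor
      · intro U
        have hsum : ∑ k ∈ U, (m + (σ * ε) • v) k
            = (∑ k ∈ U, m k) + (σ * ε) * ∑ k ∈ U, v k := by
          rw [Finset.mul_sum, ← Finset.sum_add_distrib]
          refine Finset.sum_congr rfl fun k _ => ?_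
          simp
        rw [hsum]
        by_cases hT : Tt U
        · have hz : ∑ k ∈ U, v k = 0 := by
            rw [hvU]
            rcases em (i ∈ U) with h | h
            · simp [h, (hiff U hT).mp h]
            · have hj : j ∉ U := fun hj => h ((hiff U hT).mpr hj)
              simp [h, hj]
          rw [hz, mul_zero, add_zero]
          rw [hTt] at hT
          exact le_of_eq hT
        · have hslack := hεslack U hT
          have hbd : (σ * ε) * ∑ k ∈ U, v k ≤ ε := by
            calc (σ * ε) * ∑ k ∈ U, v k ≤ |(σ * ε) * ∑ k ∈ U, v k| := le_abs_self _
              _ = |σ * ε| * |∑ k ∈ U, v k| := abs_mul _ _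
              _ ≤ ε * 1 := by
                  rw [habs]
                  exact mul_le_mul_of_nonneg_left (hvabs U) (le_of_lt hεpos)
              _ = ε := mul_one _
          linarith
      · have hz : ∑ k ∈ Finset.univ, v k = 0 := by
          rw [hvU]
          simp
        have hsum : ∑ k, (m + (σ * ε) • v) k
            = (∑ k, m k) + (σ * ε) * ∑ k ∈ Finset.univ, v k := by
          rw [Finset.mul_sum, ← Finset.sum_add_distrib]
          refine Finset.sum_congr rfl fun k _ => ?_
          simp
        rw [hsum, hz, mul_zero, add_zero]
        exact hm2
    have hplus : m + ε • v ∈ P := by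
      have := hmem' 1 (Or.inl rfl)
      rwa [one_mul] at this
    have hminus : m - ε • v ∈ P := by
      have := hmem' (-1) (Or.inr rfl)
      rw [neg_one_mul, neg_smul] at this
      rwa [← sub_eq_add_neg] at this
    have hopen : m ∈ openSegment ℝ (m + ε • v) (m - ε • v) :=
      ⟨1/2, 1/2, by norm_num, by norm_num, by norm_num, by module⟩
    have hin := hext.2 hplus hminus hm_seg hopen
    obtain ⟨u1, u2, hu1, hu2, hu12, hcombo⟩ := hin
    have hεv : ε • v = (u2 - 1/2) • (y - x) := by
      have h2 : ε • v = u1 • x + u2 • y - m := by rw [hcombo]; abel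
      have hu1e : u1 = 1 - u2 := by linarith
      rw [hu1e, hmdef] at h2
      rw [h2]
      module
    refine ⟨ε⁻¹ * (u2 - 1/2), ?_⟩
    rw [mul_smul, ← hεv, smul_smul, inv_mul_cancel₀ (ne_of_gt hεpos), one_smul]
  -- find the pair
  have hdne : y - x ≠ 0 := sub_ne_zero.mpr (Ne.symm hxy)
  obtain ⟨i₀, hi₀⟩ : ∃ i₀, (y - x) i₀ ≠ 0 := by
    by_contra h
    push_neg at h
    exact hdne (funext h)
  set 𝒢 := Finset.univ.filter (fun U : Finset (Fin n) => Tt U ∧ i₀ ∈ U) with h𝒢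
  have h𝒢ne : 𝒢.Nonempty :=
    ⟨Finset.univ, Finset.mem_filter.mpr ⟨Finset.mem_univ _, t_univ, Finset.mem_univ _⟩⟩
  obtain ⟨W, hWmem, hWmin⟩ := Finset.exists_min_image 𝒢 Finset.card h𝒢ne
  have hW : Tt W ∧ i₀ ∈ W := (Finset.mem_filter.mp hWmem).2
  have hWsub : ∀ U, Tt U → i₀ ∈ U → W ⊆ U := by
    intro U hU hiU
    have hmemI : (W ∩ U) ∈ 𝒢 := Finset.mem_filter.mpr
      ⟨Finset.mem_univ _, (tclose W U hW.1 hU).1, Finset.mem_inter.mpr ⟨hW.2, hiU⟩⟩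
    have hc := hWmin _ hmemI
    have heq : W ∩ U = W :=
      Finset.eq_of_subset_of_card_le Finset.inter_subset_left hc
    exact Finset.inter_eq_left.mp heq
  -- the equivalence class of i₀ and its sum
  obtain ⟨C, hiC, hCequiv, hCsum⟩ : ∃ C : Finset (Fin n), i₀ ∈ C ∧
      (∀ j ∈ C, ∀ U, Tt U → (i₀ ∈ U ↔ j ∈ U)) ∧ ∑ k ∈ C, (y k - x k) = 0 := by
    set 𝒢' := Finset.univ.filter (fun U : Finset (Fin n) => Tt U ∧ i₀ ∉ U) with h𝒢'
    by_cases hG' : 𝒢'.Nonempty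
    · obtain ⟨W', hW'mem, hW'max⟩ := Finset.exists_max_image 𝒢' Finset.card hG'
      have hW' : Tt W' ∧ i₀ ∉ W' := (Finset.mem_filter.mp hW'mem).2
      have hW'sup : ∀ U, Tt U → i₀ ∉ U → U ⊆ W' := by
        intro U hU hiU
        have hmemU : (U ∪ W') ∈ 𝒢' := Finset.mem_filter.mpr
          ⟨Finset.mem_univ _, (tclose U W' hU hW'.1).2, by
            simp only [Finset.mem_union, not_or]
            exact ⟨hiU, hW'.2⟩⟩
        have hc := hW'max _ hmemU
        have heq : W' = U ∪ W' :=
          Finset.eq_of_subset_of_card_le Finset.subset_union_right hc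
        exact Finset.union_eq_right.mp heq.symm
      refine ⟨W \ W', Finset.mem_sdiff.mpr ⟨hW.2, hW'.2⟩, ?_, ?_⟩
      · intro j hj U hU
        obtain ⟨hjW, hjW'⟩ := Finset.mem_sdiff.mp hj
        constructor
        · intro hi; exact hWsub U hU hi hjW
        · intro hjU
          by_contra hiU
          exact hjW' (hW'sup U hU hiU hjU)
      · have h1 := td W hW.1
        have h2 := td _ (tclose W W' hW.1 hW'.1).1
        have h3 : (∑ k ∈ W ∩ W', (y k - x k)) + ∑ k ∈ W \ W', (y k - x k)
            = ∑ k ∈ W, (y k - x k) := Finset.sum_inter_add_sum_sdiff _ _ _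
        linarith
    · refine ⟨W, hW.2, ?_, td W hW.1⟩
      intro j hj U hU
      constructor
      · intro hi; exact hWsub U hU hi hj
      · intro _
        by_contra hiU
        exact hG' ⟨U, Finset.mem_filter.mpr ⟨Finset.mem_univ _, hU, hiU⟩⟩
  -- find a second element with nonzero coordinate
  obtain ⟨j₀, hj₀C, hj₀ne, hj₀d⟩ : ∃ j₀ ∈ C, j₀ ≠ i₀ ∧ (y - x) j₀ ≠ 0 := by
    by_contra h
    push_neg at h
    have hz : ∀ k ∈ C.erase i₀, y k - x k = 0 := by
      intro k hk
      obtain ⟨hkne, hkC⟩ := Finset.mem_erase.mp hk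
      have := h k hkC hkne
      simpa [Pi.sub_apply] using this
    have hsum : ∑ k ∈ C, (y k - x k) = y i₀ - x i₀ := by
      rw [← Finset.sum_erase_add _ _ hiC, Finset.sum_eq_zero hz, zero_add]
    rw [hCsum] at hsum
    exact hi₀ (by simpa [Pi.sub_apply] using hsum.symm)
  obtain ⟨r, hr⟩ := hpair i₀ j₀ (Ne.symm hj₀ne) (fun U hU => hCequiv j₀ hj₀C U hU)
  have hrne : r ≠ 0 := by
    intro h
    rw [h, zero_smul] at hr
    have := congrFun hr i₀
    simp [Pi.single_apply, Ne.symm hj₀ne] at this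
  refine ⟨j₀, i₀, r⁻¹, ?_⟩
  have : (Pi.single i₀ (1:ℝ) - Pi.single j₀ (1:ℝ) : Fin n → ℝ) = r • (y - x) := hr
  rw [this, smul_smul, inv_mul_cancel₀ hrne, one_smul]


/-- characterization of polymatroid base polytopes / generalized
permutohedra.  For a polytope `P ⊆ ℝⁿ` (the convex hull of a finite nonempty point
set), the following are equivalent: (1) every edge of `P` (a segment `conv{x,y}`,
`x ≠ y`, that is an extreme subset of `P`) is parallel to `e_j - e_i` for some
`i, j ∈ [n]`; (2) there is a submodular function `f : 2^[n] → ℝ` with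
`P = {x : ∑_{i∈U} xᵢ ≤ f(U) for all U ⊆ [n], ∑ᵢ xᵢ = f([n])}`. -/
theorem edges_parallel_iff_polymatroid (n : ℕ) (P : Set (Fin n → ℝ))
    (hP : ∃ s : Finset (Fin n → ℝ), s.Nonempty ∧ P = convexHull ℝ (s : Set (Fin n → ℝ))) :
    ((∀ x y : Fin n → ℝ, x ≠ y → IsExtreme ℝ P (segment ℝ x y) →
        ∃ (i j : Fin n) (c : ℝ), y - x = c • (Pi.single j (1 : ℝ) - Pi.single i (1 : ℝ)))
      ↔
      (∃ f : Finset (Fin n) → ℝ,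
        (∀ T U : Finset (Fin n), f (T ∩ U) + f (T ∪ U) ≤ f T + f U) ∧
        P = {x : Fin n → ℝ | (∀ U : Finset (Fin n), ∑ i ∈ U, x i ≤ f U) ∧
          ∑ i, x i = f Finset.univ})) := by
  constructor
  · intro hedge
    obtain ⟨s, hs, hPe⟩ := hP
    subst hPe
    obtain ⟨f, h1, h2⟩ := forward hs hedge
    exact ⟨f, h1, h2⟩
  · rintro ⟨f, hsubm, hPeq⟩ x y hxy hext
    exact backward f hsubm hPeq hxy hext

end PaperPolymatroid
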